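/- Let (π, V) be an irreducible (simple, nonzero) representation of the free algebra A on n generators. If V is degenerate, i.e., there exists a nonzero v ∈ V and m ≥ 1 with v·p = 0 for all words p of length ≥ m, then dim V = 1 and π(e_i) = 0 for all 1 ≤ i ≤ n. -/
import Mathlib


/-- The action of a word `p` (a list of generator indices) on a representation of the
free algebra on `n` generators given by the endomorphisms `T i`: the first letter acts first. -/
def actWord {k V : Type*} [Field k] [AddCommGroup V] [Module k V] {n : ℕ}
    (T : Fin n → V →ₗ[k] V) : List (Fin n) → V →ₗ[k] V
  | [] => LinearMap.id
  | i :: p => (actWord T p).comp (T i)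

/-- A subspace is invariant under the action of each generator. -/
def RepInvariant {k V : Type*} [Field k] [AddCommGroup V] [Module k V] {n : ℕ}
    (T : Fin n → V →ₗ[k] V) (W : Submodule k V) : Prop :=
  ∀ i : Fin n, ∀ w ∈ W, T i w ∈ W

/-- A submodule `W ⊆ V` is complete: every `v ∈ V` is sent into `W` by all sufficiently
long words. -/
def RepComplete {k V : Type*} [Field k] [AddCommGroup V] [Module k V] {n : ℕ}
    (T : Fin n → V →ₗ[k] V) (W : Submodule k V) : Prop :=
  ∀ v : V, ∃ m : ℕ, 1 ≤ m ∧ ∀ p : List (Fin n), m ≤ p.length → actWord T p v ∈ W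

/-- From a degenerate vector we extract a nonzero vector killed by every generator. -/
lemma exists_killed {k V : Type*} [Field k] [AddCommGroup V] [Module k V] {n : ℕ}
    (T : Fin n → V →ₗ[k] V) :
    ∀ m : ℕ, ∀ v : V, v ≠ 0 →
      (∀ p : List (Fin n), m ≤ p.length → actWord T p v = 0) →
      ∃ w : V, w ≠ 0 ∧ ∀ i : Fin n, T i w = 0 := by
  intro m
  induction m with
  | zero =>
    intro v hv h
    exact absurd (h [] (by simp)) hv
  | succ m ih =>
    intro v hv h
    by_cases hk : ∀ i : Fin n, T i v = 0
    · exact ⟨v, hv, hk⟩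
    · push_neg at hk
      obtain ⟨i, hi⟩ := hk
      refine ih (T i v) hi ?_
      intro p hp
      have : actWord T p (T i v) = actWord T (i :: p) v := rfl
      rw [this]
      exact h (i :: p) (by simpa using Nat.succ_le_succ hp)

/-- A degenerate irreducible representation of the free algebra is one-dimensional with
all generators acting as zero. -/
theorem stmt10 {k V : Type*} [Field k] [AddCommGroup V] [Module k V] {n : ℕ} (hn : 2 ≤ n)
    (T : Fin n → V →ₗ[k] V)
    (hne : ∃ v : V, v ≠ 0)
    (hirr : ∀ W : Submodule k V, RepInvariant T W → W = ⊥ ∨ W = ⊤)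
    (hdeg : ∃ v : V, v ≠ 0 ∧ ∃ m : ℕ, 1 ≤ m ∧
      ∀ p : List (Fin n), m ≤ p.length → actWord T p v = 0) :
    Module.finrank k V = 1 ∧ ∀ i : Fin n, T i = 0 := by
  obtain ⟨v, hv, m, hm1, hm⟩ := hdeg
  obtain ⟨w, hw, hwk⟩ := exists_killed T m v hv hm
  -- the common kernel
  let K : Submodule k V := ⨅ i : Fin n, LinearMap.ker (T i)
  have hKinv : RepInvariant T K := by
    intro i x hx
    have : T i x = 0 := by
      have := (Submodule.mem_iInf _).mp hx i
      simpa using this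
    rw [this]; exact K.zero_mem
  have hwK : w ∈ K := (Submodule.mem_iInf _).mpr fun i => (LinearMap.mem_ker).mpr (hwk i)
  have hKtop : K = ⊤ := by
    rcases hirr K hKinv with h | h
    · exact absurd (h ▸ hwK) (by simpa using hw)
    · exact h
  have hT0 : ∀ i : Fin n, T i = 0 := by
    intro i
    ext x
    have hx : x ∈ K := hKtop ▸ Submodule.mem_top
    have := (Submodule.mem_iInf _).mp hx i
    simpa using this
  refine ⟨?_, hT0⟩
  -- every submodule is invariant, so span of w is ⊤
  have hspan : (Submodule.span k {w}) = ⊤ := by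
    rcases hirr (Submodule.span k {w}) (fun i x _ => by rw [hT0 i]; simp) with h | h
    · exact absurd (h ▸ Submodule.mem_span_singleton_self w)
        (by simpa using hw)
    · exact h
  have h1 := finrank_span_singleton (K := k) hw
  rw [hspan, finrank_top] at h1
  exact h1
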